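/- For every natural number n, there exist a finite alphabet Σ and regular languages S, B ⊆ Σ* with B ⊆ S and B extension closed with respect to S, together with a DFA M whose accepted language is a failure explanation for S and B, such that every DFA whose accepted language is an early detection failure explanation for S and B has more than n states in excess of the number of states of M. -/

import Mathlib

set_option linter.unusedSectionVars false

/-- `Pref L` is the set of prefixes of words of `L`. -/
def Pref {α : Type} (L : Set (List α)) : Set (List α) := {w | ∃ u, w ++ u ∈ L}

/-- `B` is extension closed with respect to `S`. -/
def ExtClosedWrt {α : Type} (S B : Set (List α)) : Prop :=
  ∀ w ∈ B, ∀ u : List α, w ++ u ∈ S → w ++ u ∈ B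

/-- `L` is a failure explanation for `S` and `B`. -/
def IsFE {α : Type} (S B L : Set (List α)) : Prop := B ⊆ L ∧ L ∩ (S \ B) = ∅

/-- `L` is an early detection failure explanation for `S` and `B`. -/
def IsEDFE {α : Type} (S B L : Set (List α)) : Prop :=
  IsFE S B L ∧ ∀ w, w ∈ Pref B → w ∉ Pref (S \ B) → w ∈ L

/-- `L` is a regular language: some DFA with finitely many states accepts exactly `L`. -/
def Regular {α : Type} (L : Set (List α)) : Prop :=
  ∃ (σ : Type) (_ : Fintype σ) (M : DFA α σ), ∀ w, w ∈ M.accepts ↔ w ∈ L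

lemma DFA.evalFrom_cons' {α σ : Type*} (M : DFA α σ) (s : σ) (a : α) (w : List α) :
    M.evalFrom s (a :: w) = M.evalFrom (M.step s a) w := rfl

section BoundedRegular

variable {α : Type} [Fintype α]

/-- A DFA (with states = lists of length `≤ N`, plus a dead state `none`)
recognizing any language whose words all have length `≤ N`. -/
noncomputable def boundedDFA (N : ℕ) (L' : Set (List α)) :
    DFA α (Option {l : List α // l.length ≤ N}) where
  step s a := s.bind fun l =>
    if h : l.val.length < N then some ⟨l.val ++ [a], by simpa using h⟩ else none
  start := some ⟨[], by simp⟩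
  accept := {s | ∃ l, s = some l ∧ l.val ∈ L'}

lemma boundedDFA_evalFrom_none (N : ℕ) (L' : Set (List α)) (w : List α) :
    (boundedDFA N L').evalFrom none w = none := by
  induction w with
  | nil => rfl
  | cons a w ih =>
    rw [DFA.evalFrom_cons']
    have : (boundedDFA N L').step none a = none := rfl
    rw [this, ih]

lemma boundedDFA_evalFrom_some (N : ℕ) (L' : Set (List α)) (w : List α) :
    ∀ (l : List α) (hl : l.length ≤ N) (h : l.length + w.length ≤ N),
    (boundedDFA N L').evalFrom (some ⟨l, hl⟩) w =
      some ⟨l ++ w, by simpa using h⟩ := by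
  induction w with
  | nil => intro l hl h; simp
  | cons a w ih =>
    intro l hl h
    have hlt : l.length < N := by simp at h; omega
    have step1 : (boundedDFA N L').step (some ⟨l, hl⟩) a =
        some ⟨l ++ [a], by simpa using hlt⟩ := by
      simp [boundedDFA, hlt]
    rw [DFA.evalFrom_cons', step1,
      ih (l ++ [a]) (by simpa using hlt) (by simp at h ⊢; omega)]
    simp

lemma boundedDFA_evalFrom_long (N : ℕ) (L' : Set (List α)) (w : List α) :
    ∀ (l : List α) (hl : l.length ≤ N), N < l.length + w.length →
    (boundedDFA N L').evalFrom (some ⟨l, hl⟩) w = none := by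
  induction w with
  | nil => intro l hl h; simp at h; omega
  | cons a w ih =>
    intro l hl h
    by_cases hlt : l.length < N
    · have step1 : (boundedDFA N L').step (some ⟨l, hl⟩) a =
          some ⟨l ++ [a], by simpa using hlt⟩ := by simp [boundedDFA, hlt]
      rw [DFA.evalFrom_cons', step1]
      exact ih (l ++ [a]) (by simpa using hlt) (by simp at h ⊢; omega)
    · have step1 : (boundedDFA N L').step (some ⟨l, hl⟩) a = none := by
        simp [boundedDFA, hlt]
      rw [DFA.evalFrom_cons', step1]
      exact boundedDFA_evalFrom_none N L' w

lemma regular_of_bounded (N : ℕ) (L' : Set (List α))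
    (hL : ∀ w ∈ L', w.length ≤ N) : Regular L' := by
  classical
  haveI : Fintype {l : List α // l.length ≤ N} :=
    (List.finite_length_le α N).fintype
  refine ⟨Option {l : List α // l.length ≤ N}, inferInstance, boundedDFA N L', ?_⟩
  have hs : (boundedDFA N L').start = (some ⟨[], by simp⟩ :
      Option {l : List α // l.length ≤ N}) := rfl
  intro w
  constructor
  · intro hw
    rw [DFA.mem_accepts] at hw
    obtain ⟨l, hl, hmem⟩ := hw
    by_cases hlen : w.length ≤ N
    · have heval : (boundedDFA N L').eval w = some ⟨[] ++ w, by simpa using hlen⟩ := by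
        rw [DFA.eval, hs]
        exact boundedDFA_evalFrom_some N L' w [] (by simp) (by simpa using hlen)
      rw [heval] at hl
      cases hl
      simpa using hmem
    · exfalso
      have heval : (boundedDFA N L').eval w = none := by
        rw [DFA.eval, hs]
        exact boundedDFA_evalFrom_long N L' w [] (by simp) (by simp; omega)
      rw [heval] at hl
      cases hl
  · intro hw
    have hlen : w.length ≤ N := hL w hw
    rw [DFA.mem_accepts, DFA.eval, hs,
      boundedDFA_evalFrom_some N L' w [] (by simp) (by simpa using hlen)]
    exact ⟨⟨[] ++ w, by simpa using hlen⟩, rfl, by simpa using hw⟩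

end BoundedRegular
section Main

/-- The 3-state DFA over `Bool` accepting words containing two consecutive `true`s. -/
def twoTrueDFA : DFA Bool (Fin 3) where
  step s a := if s = 2 then 2 else if a then s + 1 else 0
  start := 0
  accept := {2}

lemma twoTrueDFA_replicate (k : ℕ) :
    twoTrueDFA.evalFrom 0 (List.replicate k false) = 0 := by
  induction k with
  | zero => rfl
  | succ k ih =>
    rw [List.replicate_succ, DFA.evalFrom_cons']
    have : twoTrueDFA.step 0 false = 0 := rfl
    rw [this, ih]

theorem stmt14 (n : ℕ) :
    ∃ (α : Type) (_ : Fintype α) (S B : Set (List α)),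
      B ⊆ S ∧ ExtClosedWrt S B ∧ Regular S ∧ Regular B ∧
      ∃ (σ : Type) (instσ : Fintype σ) (M : DFA α σ),
        IsFE S B {w | w ∈ M.accepts} ∧
        ∀ (τ : Type) [Fintype τ], ∀ N : DFA α τ,
          IsEDFE S B {w | w ∈ N.accepts} →
            @Fintype.card σ instσ + n < Fintype.card τ := by
  classical
  set m := n + 3 with hm
  set w0 : List Bool := List.replicate m false ++ [true, true] with hw0
  set B : Set (List Bool) := {w0} with hB
  set T : Set (List Bool) := {w | ∃ k, k < m ∧ w = List.replicate k false ++ [true]} with hT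
  set S : Set (List Bool) := B ∪ T with hS
  have hw0len : w0.length = m + 2 := by simp [hw0]
  have hTlen : ∀ w ∈ T, ∃ k, k < m ∧ w.length = k + 1 := by
    rintro w ⟨k, hk, rfl⟩; exact ⟨k, hk, by simp⟩
  have hTnotB : ∀ w ∈ T, w ∉ B := by
    intro w hw hwB
    obtain ⟨k, hk, hlen⟩ := hTlen w hw
    rw [Set.mem_singleton_iff] at hwB
    rw [hwB, hw0len] at hlen; omega
  have hSdiffB : S \ B = T := by
    ext w
    constructor
    · rintro ⟨hwS, hwB⟩
      rcases hwS with h | h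
      · exact absurd h hwB
      · exact h
    · intro hw; exact ⟨Or.inr hw, hTnotB w hw⟩
  refine ⟨Bool, inferInstance, S, B, Set.subset_union_left, ?_, ?_, ?_,
    Fin 3, inferInstance, twoTrueDFA, ?_, ?_⟩
  · -- extension closed
    intro w hw u hu
    rw [Set.mem_singleton_iff] at hw
    rcases hu with h | h
    · exact h
    · exfalso
      obtain ⟨k, hk, hlen⟩ := hTlen _ h
      rw [hw] at hlen
      simp [hw0len] at hlen
      omega
  · -- Regular S
    apply regular_of_bounded (m + 2)
    intro w hw
    rcases hw with h | h
    · rw [Set.mem_singleton_iff] at h; rw [h, hw0len]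
    · obtain ⟨k, hk, hlen⟩ := hTlen w h; omega
  · -- Regular B
    apply regular_of_bounded (m + 2)
    intro w hw
    rw [Set.mem_singleton_iff] at hw; rw [hw, hw0len]
  · -- IsFE
    constructor
    · intro w hw
      rw [Set.mem_singleton_iff] at hw
      subst hw
      show w0 ∈ twoTrueDFA.accepts
      rw [DFA.mem_accepts]
      have : twoTrueDFA.eval w0 = 2 := by
        rw [hw0, DFA.eval, DFA.evalFrom_of_append]
        have h0 : twoTrueDFA.start = 0 := rfl
        rw [h0, twoTrueDFA_replicate]
        rfl
      rw [this]
      exact Set.mem_singleton _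
    · rw [hSdiffB]
      rw [Set.eq_empty_iff_forall_notMem]
      rintro w ⟨hw1, k, hk, rfl⟩
      have : twoTrueDFA.eval (List.replicate k false ++ [true]) = 1 := by
        rw [DFA.eval, DFA.evalFrom_of_append]
        have h0 : twoTrueDFA.start = 0 := rfl
        rw [h0, twoTrueDFA_replicate]
        rfl
      have hw1' : twoTrueDFA.eval (List.replicate k false ++ [true]) ∈ twoTrueDFA.accept := hw1
      rw [this] at hw1'
      simp [twoTrueDFA] at hw1'
  · -- lower bound
    intro τ instτ N hN
    have hcard3 : Fintype.card (Fin 3) = 3 := by simp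
    rw [hcard3]
    by_contra hle
    push_neg at hle
    have hle' : Fintype.card τ ≤ m := by omega
    set f : Fin (m + 1) → τ := fun i => N.eval (List.replicate i false) with hf
    have hninj : ¬ Function.Injective f := by
      intro hinj
      have := Fintype.card_le_of_injective f hinj
      simp at this
      omega
    rw [Function.not_injective_iff] at hninj
    obtain ⟨a, b, hab, hne⟩ := hninj
    -- wlog i < j
    have key : ∀ i j : Fin (m + 1), i < j → f i = f j → False := by
      intro i j hij hfeq
      set u : List Bool := List.replicate (m - j) false ++ [true] with hu
      have hAeq : List.replicate (j : ℕ) false ++ u = List.replicate m false ++ [true] := by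
        rw [hu, ← List.append_assoc, ← List.replicate_add]
        congr 2
        have : (j : ℕ) ≤ m := by omega
        omega
      set kc : ℕ := (i : ℕ) + (m - j) with hkc
      have hkclt : kc < m := by
        have h1 : (i : ℕ) < (j : ℕ) := hij
        have h2 : (j : ℕ) ≤ m := by omega
        omega
      have hCeq : List.replicate (i : ℕ) false ++ u = List.replicate kc false ++ [true] := by
        rw [hu, ← List.append_assoc, ← List.replicate_add]
      -- same evaluation
      have hfeq' : N.evalFrom N.start (List.replicate (i : ℕ) false) =
          N.evalFrom N.start (List.replicate (j : ℕ) false) := hfeq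
      have heval' : ∀ v : List Bool, N.eval (List.replicate (i : ℕ) false ++ v) =
          N.eval (List.replicate (j : ℕ) false ++ v) := by
        intro v
        show N.evalFrom N.start _ = N.evalFrom N.start _
        rw [DFA.evalFrom_of_append, DFA.evalFrom_of_append, hfeq']
      have heval := heval' u
      -- the j-word is forced into L
      have hAinL : (List.replicate (j : ℕ) false ++ u) ∈ {w | w ∈ N.accepts} := by
        apply hN.2
        · refine ⟨[true], ?_⟩
          rw [hAeq, List.append_assoc]
          show _ ∈ B
          rw [hB, Set.mem_singleton_iff, hw0]
          rfl
        · rintro ⟨v, hv⟩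
          rw [hSdiffB] at hv
          obtain ⟨k, hk, hvlen⟩ := hTlen _ hv
          rw [hAeq] at hvlen
          simp at hvlen
          omega
      -- the i-word is forced out of L
      have hCnotL : (List.replicate (i : ℕ) false ++ u) ∉ {w | w ∈ N.accepts} := by
        intro hmem
        have hinT : (List.replicate (i : ℕ) false ++ u) ∈ S \ B := by
          rw [hSdiffB, hCeq]
          exact ⟨kc, hkclt, rfl⟩
        have := hN.1.2
        rw [Set.eq_empty_iff_forall_notMem] at this
        exact this _ ⟨hmem, hinT⟩
      apply hCnotL
      show _ ∈ N.accepts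
      rw [DFA.mem_accepts, heval]
      exact hAinL
    rcases lt_or_gt_of_ne hne with h | h
    · exact key a b h hab
    · exact key b a h hab.symm

end Main
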